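/- Let p be a prime, a a positive integer coprime to p, and n, s positive integers. Then the p-adic valuation of m(a·p^n, s) equals the p-adic valuation of m(p^n, s), where m(a,s) = gcd{ C(a,i) : 1 ≤ i ≤ s }. -/

import Mathlib

open Nat Finset

theorem lemA (p a n k : ℕ) [hp : Fact p.Prime] (ha : 0 < a) (hcop : ¬ p ∣ a) (hk : k ≤ n) :
    padicValNat p ((a * p ^ n).choose (p ^ k)) = n - k := by
  have hp1 : 1 < p := hp.out.one_lt
  have hkn : p ^ k ≤ a * p ^ n := le_trans (Nat.pow_le_pow_right hp1.le hk)
    (Nat.le_mul_of_pos_left _ ha)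
  rw [padicValNat_choose hkn (lt_succ_self _)]
  have hlog : n ≤ Nat.log p (a * p ^ n) :=
    Nat.le_log_of_pow_le hp1 (Nat.le_mul_of_pos_left _ ha)
  have hset : (Finset.Ico 1 (Nat.log p (a * p ^ n) + 1)).filter
      (fun i => p ^ i ≤ p ^ k % p ^ i + (a * p ^ n - p ^ k) % p ^ i)
      = Finset.Ico (k + 1) (n + 1) := by
    ext i
    simp only [Finset.mem_filter, Finset.mem_Ico]
    constructor
    · rintro ⟨⟨hi1, hi2⟩, hcond⟩
      have hpi : 0 < p ^ i := pow_pos (by omega) i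
      constructor
      · -- i ≥ k+1 : else both mods are 0
        by_contra h
        push_neg at h
        have hik : i ≤ k := by omega
        have d1 : p ^ i ∣ p ^ k := pow_dvd_pow p hik
        have d2 : p ^ i ∣ a * p ^ n - p ^ k :=
          Nat.dvd_sub (Dvd.dvd.mul_left (pow_dvd_pow p (hik.trans hk)) a) d1
        have hz1 : p ^ k % p ^ i = 0 := Nat.mod_eq_zero_of_dvd d1
        have hz2 : (a * p ^ n - p ^ k) % p ^ i = 0 := Nat.mod_eq_zero_of_dvd d2
        omega
      · -- i ≤ n : else no carry
        by_contra h
        push_neg at h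
        have hni : n < i := by omega
        have him : i = (i - n) + n := by omega
        have hr0 : 0 < a % p ^ (i - n) := by
          rcases Nat.eq_zero_or_pos (a % p ^ (i - n)) with h0 | h0
          · exact absurd ((dvd_pow_self p (by omega : i - n ≠ 0)).trans
              (Nat.dvd_of_mod_eq_zero h0)) hcop
          · exact h0
        have hr : a % p ^ (i - n) < p ^ (i - n) := Nat.mod_lt _ (pow_pos (by omega) _)
        have hkn' : p ^ k ≤ p ^ n := Nat.pow_le_pow_right (by omega) hk
        have hpn : 0 < p ^ n := pow_pos (by omega) n
        have hpk0 : 0 < p ^ k := pow_pos (by omega) k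
        obtain ⟨R, hR⟩ : ∃ R, a % p ^ (i - n) * p ^ n = R := ⟨_, rfl⟩
        obtain ⟨Q, hQ⟩ : ∃ Q, a / p ^ (i - n) * p ^ i = Q := ⟨_, rfl⟩
        obtain ⟨A, hA⟩ : ∃ A, a * p ^ n = A := ⟨_, rfl⟩
        rw [hA] at hcond
        have e1 : A = Q + R := by
          rw [← hA, ← hR, ← hQ]
          have hpow : p ^ i = p ^ (i - n) * p ^ n := by rw [← pow_add, Nat.sub_add_cancel hni.le]
          rw [hpow, ← mul_assoc, ← add_mul, Nat.div_add_mod']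
        have hRlow : p ^ n ≤ R := hR ▸ Nat.le_mul_of_pos_left _ hr0
        have hRhigh : R + p ^ n ≤ p ^ i := by
          calc R + p ^ n = (a % p ^ (i - n) + 1) * p ^ n := by rw [← hR]; ring
          _ ≤ p ^ (i - n) * p ^ n := Nat.mul_le_mul_right _ (by omega)
          _ = p ^ i := by rw [← pow_add, ← him]
        have key : A - p ^ k = (R - p ^ k) + Q := by omega
        have emod : (A - p ^ k) % p ^ i = R - p ^ k := by
          rw [key, ← hQ, Nat.add_mul_mod_self_right, Nat.mod_eq_of_lt (by omega)]
        have ekmod : p ^ k % p ^ i = p ^ k := Nat.mod_eq_of_lt (by omega)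
        rw [emod, ekmod] at hcond
        omega
    · rintro ⟨hi1, hi2⟩
      have hik : k < i := hi1
      have hin : i ≤ n := by omega
      refine ⟨⟨by omega, by omega⟩, ?_⟩
      have hki : p ^ k < p ^ i := Nat.pow_lt_pow_right hp1 hik
      have hpk : 0 < p ^ k := pow_pos (by omega) k
      have ekmod : p ^ k % p ^ i = p ^ k := Nat.mod_eq_of_lt hki
      obtain ⟨c, hc⟩ : ∃ c, a * p ^ (n - i) = c := ⟨_, rfl⟩
      have hc1 : 1 ≤ c := by
        rw [← hc]; exact Nat.one_le_iff_ne_zero.mpr (by positivity)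
      obtain ⟨A, hA⟩ : ∃ A, a * p ^ n = A := ⟨_, rfl⟩
      rw [hA]
      have e1 : A = c * p ^ i := by
        rw [← hA, ← hc, mul_assoc, ← pow_add]; congr 2; omega
      obtain ⟨C, hC⟩ : ∃ C, (c - 1) * p ^ i = C := ⟨_, rfl⟩
      have hsub : C = c * p ^ i - p ^ i := by rw [← hC, Nat.sub_one_mul]
      have hcpi : p ^ i ≤ c * p ^ i := Nat.le_mul_of_pos_left _ (by omega)
      have key : A - p ^ k = (p ^ i - p ^ k) + C := by omega
      have emod : (A - p ^ k) % p ^ i = p ^ i - p ^ k := by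
        rw [key, ← hC, Nat.add_mul_mod_self_right, Nat.mod_eq_of_lt (by omega)]
      rw [emod, ekmod]
      omega
  rw [hset, Nat.card_Ico]
  omega

theorem lemB (p N i : ℕ) [hp : Fact p.Prime] (hN : 0 < N) (hi : 0 < i) (hiN : i ≤ N) :
    padicValNat p N ≤ padicValNat p (N.choose i) + padicValNat p i := by
  have key : N * (N - 1).choose (i - 1) = N.choose i * i := by
    have := Nat.add_one_mul_choose_eq (N - 1) (i - 1)
    have h1 : N - 1 + 1 = N := by omega
    have h2 : i - 1 + 1 = i := by omega
    rwa [h1, h2] at this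
  have hc0 : 0 < (N - 1).choose (i - 1) := Nat.choose_pos (by omega)
  have hc1 : 0 < N.choose i := Nat.choose_pos hiN
  have := congrArg (padicValNat p) key
  rw [padicValNat.mul (by omega) (by omega), padicValNat.mul (by omega) (by omega)] at this
  omega

theorem master (p a n s : ℕ) [hp : Fact p.Prime] (ha : 0 < a) (hcop : ¬ p ∣ a)
    (hn : 0 < n) (hs : 0 < s) :
    padicValNat p ((Finset.Icc 1 s).gcd (Nat.choose (a * p ^ n)))
      = n - min n (Nat.log p s) := by
  have hp1 : 1 < p := hp.out.one_lt
  set k := min n (Nat.log p s) with hkdef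
  have hk : k ≤ n := min_le_left _ _
  have hpks : p ^ k ≤ s := by
    calc p ^ k ≤ p ^ Nat.log p s := Nat.pow_le_pow_right (by omega) (min_le_right _ _)
    _ ≤ s := Nat.pow_log_le_self p (by omega)
  have hmem : p ^ k ∈ Finset.Icc 1 s :=
    Finset.mem_Icc.mpr ⟨Nat.one_le_iff_ne_zero.mpr (pow_pos (by omega) k).ne', hpks⟩
  have hkn : p ^ k ≤ a * p ^ n := le_trans (Nat.pow_le_pow_right hp1.le hk)
    (Nat.le_mul_of_pos_left _ ha)
  have hCne : (a * p ^ n).choose (p ^ k) ≠ 0 := (Nat.choose_pos hkn).ne'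
  have hGdvd : (Finset.Icc 1 s).gcd (Nat.choose (a * p ^ n)) ∣ (a * p ^ n).choose (p ^ k) :=
    Finset.gcd_dvd hmem
  have hGne : (Finset.Icc 1 s).gcd (Nat.choose (a * p ^ n)) ≠ 0 := by
    intro h
    rw [h] at hGdvd
    exact hCne (zero_dvd_iff.mp hGdvd)
  have hval : padicValNat p ((a * p ^ n).choose (p ^ k)) = n - k := lemA p a n k ha hcop hk
  have hub : padicValNat p ((Finset.Icc 1 s).gcd (Nat.choose (a * p ^ n))) ≤ n - k := by
    rw [← hval]
    exact (padicValNat_dvd_iff_le hCne).mp ((pow_padicValNat_dvd).trans hGdvd)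
  have hlb : n - k ≤ padicValNat p ((Finset.Icc 1 s).gcd (Nat.choose (a * p ^ n))) := by
    apply (padicValNat_dvd_iff_le hGne).mp
    apply Finset.dvd_gcd
    intro i hi
    rw [Finset.mem_Icc] at hi
    rcases Nat.lt_or_ge (a * p ^ n) i with hlt | hle
    · rw [Nat.choose_eq_zero_of_lt hlt]; exact dvd_zero _
    · have hCi : (a * p ^ n).choose i ≠ 0 := (Nat.choose_pos hle).ne'
      rw [padicValNat_dvd_iff_le hCi]
      have hB := lemB p (a * p ^ n) i (by positivity) (by omega) hle
      have hvN : padicValNat p (a * p ^ n) = n := by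
        rw [padicValNat.mul (by omega) (by positivity),
          padicValNat.eq_zero_of_not_dvd hcop, padicValNat.prime_pow, Nat.zero_add]
      have hvi : padicValNat p i ≤ Nat.log p s := by
        apply Nat.le_log_of_pow_le hp1
        calc p ^ padicValNat p i ≤ i := Nat.le_of_dvd (by omega) pow_padicValNat_dvd
        _ ≤ s := hi.2
      omega
  omega

/-- For `p` prime, `a` coprime to `p`, and `n`, `s` positive, the `p`-adic valuation of
`m (a * p^n) s` equals that of `m (p^n) s`, where `m a s = gcd {C(a,i) : 1 ≤ i ≤ s}`. -/
theorem padicValNat_gcd_choose_mul (p a n s : ℕ) (hp : p.Prime) (ha : 0 < a)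
    (hcop : Nat.Coprime a p) (hn : 0 < n) (hs : 0 < s) :
    padicValNat p ((Finset.Icc 1 s).gcd (Nat.choose (a * p ^ n))) =
      padicValNat p ((Finset.Icc 1 s).gcd (Nat.choose (p ^ n))) := by
  haveI : Fact p.Prime := ⟨hp⟩
  have h1 := master p a n s ha ((Nat.Prime.coprime_iff_not_dvd hp).mp hcop.symm) hn hs
  have h2 := master p 1 n s one_pos (Nat.Prime.not_dvd_one hp) hn hs
  rw [one_mul] at h2
  rw [h1, h2]
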